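/- The rank of the matroid union M₁ ∨ ⋯ ∨ Mₙ of matroids on a common ground set S, evaluated at X ⊆ S, equals min over Y ⊆ X of (∑ᵢ rᵢ(Y) + |X \ Y|), where rᵢ is the rank function of Mᵢ. -/

import Mathlib

open Finset

/-- A matroid given by its family of independent finite sets. -/
structure FinMatroid (α : Type*) [DecidableEq α] where
  Indep : Finset α → Prop
  indep_empty : Indep ∅
  indep_subset : ∀ ⦃I J : Finset α⦄, Indep J → I ⊆ J → Indep I
  indep_aug : ∀ ⦃I J : Finset α⦄, Indep I → Indep J → I.card < J.card →
    ∃ s ∈ J \ I, Indep (insert s I)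

/-- Independence in the union `M₁ ∨ ⋯ ∨ Mₙ` of matroids. -/
def unionIndep {α : Type*} [DecidableEq α] {n : ℕ} (M : Fin n → FinMatroid α)
    (I : Finset α) : Prop :=
  ∃ f : Fin n → Finset α, (∀ i, (M i).Indep (f i)) ∧ I = Finset.univ.biUnion f

/-- The rank of a subset `X` w.r.t. an independence family: the maximal size of
an independent subset of `X`. -/
noncomputable def rankOf {α : Type*} (Indep : Finset α → Prop) (X : Finset α) : ℕ :=
  sSup {k : ℕ | ∃ I : Finset α, I ⊆ X ∧ Indep I ∧ I.card = k}

set_option linter.unusedSectionVars false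
set_option linter.unusedVariables false

section RankBasics

variable {α : Type*} [DecidableEq α]

lemma rank_set_bdd (Indep : Finset α → Prop) (X : Finset α) :
    BddAbove {k : ℕ | ∃ I : Finset α, I ⊆ X ∧ Indep I ∧ I.card = k} := by
  refine ⟨X.card, ?_⟩
  rintro k ⟨I, hIX, -, rfl⟩
  exact Finset.card_le_card hIX

lemma le_rankOf {Indep : Finset α → Prop} {X I : Finset α} (hIX : I ⊆ X) (hI : Indep I) :
    I.card ≤ rankOf Indep X :=
  le_csSup (rank_set_bdd _ X) ⟨I, hIX, hI, rfl⟩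

lemma rankOf_le {Indep : Finset α → Prop} {X : Finset α} {m : ℕ} (h0 : Indep ∅)
    (h : ∀ I, I ⊆ X → Indep I → I.card ≤ m) : rankOf Indep X ≤ m := by
  refine csSup_le ⟨0, ∅, by simp [h0]⟩ ?_
  rintro k ⟨I, hIX, hI, rfl⟩
  exact h I hIX hI

lemma exists_rank_set {Indep : Finset α → Prop} (h0 : Indep ∅) (X : Finset α) :
    ∃ I, I ⊆ X ∧ Indep I ∧ I.card = rankOf Indep X := by
  have hne : {k : ℕ | ∃ I : Finset α, I ⊆ X ∧ Indep I ∧ I.card = k}.Nonempty :=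
    ⟨0, ∅, by simp, h0, rfl⟩
  exact Nat.sSup_mem hne (rank_set_bdd _ X)

lemma rankOf_mono {Indep : Finset α → Prop} (h0 : Indep ∅) {X Y : Finset α} (hXY : X ⊆ Y) :
    rankOf Indep X ≤ rankOf Indep Y :=
  rankOf_le h0 fun _ hIX hI => le_rankOf (hIX.trans hXY) hI

lemma rankOf_empty {Indep : Finset α → Prop} (h0 : Indep ∅) :
    rankOf Indep (∅ : Finset α) = 0 :=
  Nat.le_zero.mp (rankOf_le h0 fun I hIX _ => by
    simp [Finset.subset_empty.mp hIX])

/-- Extension: any independent subset extends to a maximum one. -/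
lemma exists_basis_ext (M : FinMatroid α) :
    ∀ (m : ℕ) (I X : Finset α), I ⊆ X → M.Indep I → rankOf M.Indep X = I.card + m →
      ∃ J, I ⊆ J ∧ J ⊆ X ∧ M.Indep J ∧ J.card = rankOf M.Indep X := by
  intro m
  induction m with
  | zero => exact fun I X hIX hI h => ⟨I, Finset.Subset.rfl, hIX, hI, by omega⟩
  | succ m ih =>
    intro I X hIX hI h
    obtain ⟨B, hBX, hB, hBcard⟩ := exists_rank_set M.indep_empty X
    have hlt : I.card < B.card := by omega
    obtain ⟨s, hs, hins⟩ := M.indep_aug hI hB hlt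
    rw [Finset.mem_sdiff] at hs
    have h1 : insert s I ⊆ X := Finset.insert_subset (hBX hs.1) hIX
    have h2 : (insert s I).card = I.card + 1 := Finset.card_insert_of_notMem hs.2
    obtain ⟨J, hIJ, rest⟩ := ih (insert s I) X h1 hins (by omega)
    exact ⟨J, (Finset.subset_insert s I).trans hIJ, rest⟩

lemma exists_basis_superset (M : FinMatroid α) {I X : Finset α} (hIX : I ⊆ X)
    (hI : M.Indep I) :
    ∃ J, I ⊆ J ∧ J ⊆ X ∧ M.Indep J ∧ J.card = rankOf M.Indep X := by
  have h := le_rankOf hIX hI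
  exact exists_basis_ext M (rankOf M.Indep X - I.card) I X hIX hI (by omega)

lemma rank_submod (M : FinMatroid α) (A B : Finset α) :
    rankOf M.Indep (A ∪ B) + rankOf M.Indep (A ∩ B) ≤
      rankOf M.Indep A + rankOf M.Indep B := by
  obtain ⟨I, hIAB, hIind, hIcard⟩ := exists_rank_set M.indep_empty (A ∩ B)
  have hIU : I ⊆ A ∪ B := hIAB.trans (Finset.inter_subset_left.trans Finset.subset_union_left)
  obtain ⟨J, hIJ, hJU, hJind, hJcard⟩ := exists_basis_superset M hIU hIind
  have hJA : (J ∩ A).card ≤ rankOf M.Indep A :=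
    le_rankOf Finset.inter_subset_right (M.indep_subset hJind Finset.inter_subset_left)
  have hJB : (J ∩ B).card ≤ rankOf M.Indep B :=
    le_rankOf Finset.inter_subset_right (M.indep_subset hJind Finset.inter_subset_left)
  have hcard : (J ∩ A).card + (J ∩ B).card = J.card + (J ∩ (A ∩ B)).card := by
    have h1 : (J ∩ A) ∪ (J ∩ B) = J := by
      rw [← Finset.inter_union_distrib_left]
      exact Finset.inter_eq_left.mpr hJU
    have h2 : (J ∩ A) ∩ (J ∩ B) = J ∩ (A ∩ B) := by
      ext a; simp only [Finset.mem_inter]; tauto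
    have := Finset.card_union_add_card_inter (J ∩ A) (J ∩ B)
    rw [h1, h2] at this
    omega
  have hIJ' : I ⊆ J ∩ (A ∩ B) := fun a ha => Finset.mem_inter.mpr ⟨hIJ ha, hIAB ha⟩
  have := Finset.card_le_card hIJ'
  omega

lemma rank_insert_of_not_indep (M : FinMatroid α) {x : α} (h : ¬ M.Indep {x}) (Y : Finset α) :
    rankOf M.Indep (insert x Y) = rankOf M.Indep Y := by
  refine le_antisymm (rankOf_le M.indep_empty fun I hIY hI => ?_)
    (rankOf_mono M.indep_empty (Finset.subset_insert x Y))
  have hxI : x ∉ I := fun hx => h (M.indep_subset hI (Finset.singleton_subset_iff.mpr hx))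
  refine le_rankOf (fun a ha => ?_) hI
  rcases Finset.mem_insert.mp (hIY ha) with rfl | h'
  · exact absurd ha hxI
  · exact h'

lemma rank_insert_preserve (M : FinMatroid α) {x : α} {A B : Finset α}
    (hA : rankOf M.Indep (insert x A) = rankOf M.Indep A) (hxA : x ∉ A) (hxB : x ∉ B) :
    rankOf M.Indep (insert x (A ∪ B)) = rankOf M.Indep (A ∪ B) := by
  have hsub := rank_submod M (insert x A) (A ∪ B)
  have h1 : (insert x A) ∪ (A ∪ B) = insert x (A ∪ B) := by
    rw [Finset.insert_union, ← Finset.union_assoc, Finset.union_self]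
  have h2 : (insert x A) ∩ (A ∪ B) = A := by
    ext a
    simp only [Finset.mem_inter, Finset.mem_insert, Finset.mem_union]
    constructor
    · rintro ⟨rfl | ha, h | h⟩ <;> first | exact absurd h hxA | exact absurd h hxB | assumption
    · intro ha; exact ⟨Or.inr ha, Or.inl ha⟩
  rw [h1, h2, hA] at hsub
  have := rankOf_mono M.indep_empty (Finset.subset_insert x (A ∪ B)) (Indep := M.Indep)
  have hAu := rankOf_mono M.indep_empty (Finset.subset_union_left (s₁ := A) (s₂ := B)) (Indep := M.Indep)
  omega

end RankBasics

section Contract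

variable {α : Type*} [DecidableEq α]

/-- Contraction of a matroid by a non-loop element. -/
def FinMatroid.contract (M : FinMatroid α) (x : α) (hx : M.Indep {x}) : FinMatroid α where
  Indep I := x ∉ I ∧ M.Indep (insert x I)
  indep_empty := ⟨Finset.notMem_empty x, by simpa using hx⟩
  indep_subset := by
    rintro I J ⟨hxJ, hJ⟩ hIJ
    exact ⟨fun h => hxJ (hIJ h), M.indep_subset hJ (Finset.insert_subset_insert x hIJ)⟩
  indep_aug := by
    rintro I J ⟨hxI, hI⟩ ⟨hxJ, hJ⟩ hcard
    have hc : (insert x I).card < (insert x J).card := by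
      rw [Finset.card_insert_of_notMem hxI, Finset.card_insert_of_notMem hxJ]; omega
    obtain ⟨s, hs, hins⟩ := M.indep_aug hI hJ hc
    rw [Finset.mem_sdiff, Finset.mem_insert] at hs
    obtain ⟨hs1, hs2⟩ := hs
    have hsx : s ≠ x := fun h => hs2 (by simp [h])
    have hsJ : s ∈ J := hs1.resolve_left hsx
    have hsI : s ∉ I := fun h => hs2 (Finset.mem_insert_of_mem h)
    refine ⟨s, Finset.mem_sdiff.mpr ⟨hsJ, hsI⟩, ?_, ?_⟩
    · simp only [Finset.mem_insert]
      rintro (rfl | h)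
      · exact hsx rfl
      · exact hxI h
    · rwa [Finset.insert_comm]

lemma contract_rank (M : FinMatroid α) {x : α} (hx : M.Indep {x}) {Z : Finset α} (hxZ : x ∉ Z) :
    rankOf (M.contract x hx).Indep Z + 1 = rankOf M.Indep (insert x Z) := by
  obtain ⟨I, hIZ, ⟨hxI, hI⟩, hIcard⟩ := exists_rank_set (M.contract x hx).indep_empty Z
  have h1 : (insert x I).card ≤ rankOf M.Indep (insert x Z) :=
    le_rankOf (Finset.insert_subset_insert x hIZ) hI
  rw [Finset.card_insert_of_notMem hxI] at h1
  have hxmem : ({x} : Finset α) ⊆ insert x Z := by simp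
  obtain ⟨J, hxJ, hJZ, hJind, hJcard⟩ := exists_basis_superset M hxmem hx
  have hxJ' : x ∈ J := hxJ (Finset.mem_singleton_self x)
  have hJeZ : J.erase x ⊆ Z := by
    intro a ha
    rw [Finset.mem_erase] at ha
    rcases Finset.mem_insert.mp (hJZ ha.2) with rfl | h
    · exact absurd rfl ha.1
    · exact h
  have h2 : (J.erase x).card ≤ rankOf (M.contract x hx).Indep Z := by
    refine le_rankOf hJeZ ⟨Finset.notMem_erase x J, ?_⟩
    rwa [Finset.insert_erase hxJ']
  have h3 : (J.erase x).card = J.card - 1 := Finset.card_erase_of_mem hxJ'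
  have h4 : 1 ≤ rankOf M.Indep (insert x Z) := by
    have := le_rankOf hxmem hx
    simpa using this
  omega

end Contract

section UnionIndep

variable {α : Type*} [DecidableEq α] {n : ℕ}

lemma unionIndep_empty (M : Fin n → FinMatroid α) : unionIndep M ∅ :=
  ⟨fun _ => ∅, fun i => (M i).indep_empty, by ext a; simp⟩

lemma unionIndep_subset {M : Fin n → FinMatroid α} {I J : Finset α}
    (hI : unionIndep M I) (hJI : J ⊆ I) : unionIndep M J := by
  obtain ⟨f, hf, rfl⟩ := hI
  refine ⟨fun i => f i ∩ J, fun i => (M i).indep_subset (hf i) Finset.inter_subset_left, ?_⟩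
  ext a
  simp only [Finset.mem_biUnion, Finset.mem_univ, true_and, Finset.mem_inter]
  constructor
  · intro ha
    obtain ⟨i, hi⟩ := Finset.mem_biUnion.mp (hJI ha)
    exact ⟨i, hi.2, ha⟩
  · rintro ⟨i, _, ha⟩
    exact ha

lemma unionIndep_card_le {M : Fin n → FinMatroid α} {X I Y : Finset α}
    (hIX : I ⊆ X) (hI : unionIndep M I) (hYX : Y ⊆ X) :
    I.card ≤ (∑ i, rankOf (M i).Indep Y) + (X \ Y).card := by
  obtain ⟨f, hf, rfl⟩ := hI
  set I := Finset.univ.biUnion f with hIdef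
  have h1 : (I ∩ Y).card + (I \ Y).card = I.card := Finset.card_inter_add_card_sdiff I Y
  have h2 : (I \ Y).card ≤ (X \ Y).card :=
    Finset.card_le_card (Finset.sdiff_subset_sdiff hIX Finset.Subset.rfl)
  have h3 : I ∩ Y = Finset.univ.biUnion (fun i => f i ∩ Y) := by
    rw [hIdef, Finset.biUnion_inter]
  have h4 : (I ∩ Y).card ≤ ∑ i, (f i ∩ Y).card := by
    rw [h3]; exact Finset.card_biUnion_le
  have h5 : ∑ i, (f i ∩ Y).card ≤ ∑ i, rankOf (M i).Indep Y := by
    refine Finset.sum_le_sum fun i _ => ?_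
    exact le_rankOf Finset.inter_subset_right ((M i).indep_subset (hf i) Finset.inter_subset_left)
  omega

end UnionIndep

section Main

variable {α : Type*} [DecidableEq α] {n : ℕ}

noncomputable def kmin (M : Fin n → FinMatroid α) (X : Finset α) : ℕ :=
  X.powerset.inf' ⟨∅, Finset.empty_mem_powerset X⟩
    (fun Y => (∑ i, rankOf (M i).Indep Y) + (X \ Y).card)

lemma kmin_le {M : Fin n → FinMatroid α} {X Y : Finset α} (h : Y ⊆ X) :
    kmin M X ≤ (∑ i, rankOf (M i).Indep Y) + (X \ Y).card :=
  Finset.inf'_le _ (Finset.mem_powerset.mpr h)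

lemma exists_kmin (M : Fin n → FinMatroid α) (X : Finset α) :
    ∃ Y, Y ⊆ X ∧ kmin M X = (∑ i, rankOf (M i).Indep Y) + (X \ Y).card := by
  obtain ⟨Y, hY, hval⟩ := Finset.exists_mem_eq_inf' (⟨∅, Finset.empty_mem_powerset X⟩ :
    X.powerset.Nonempty) (fun Y => (∑ i, rankOf (M i).Indep Y) + (X \ Y).card)
  exact ⟨Y, Finset.mem_powerset.mp hY, hval⟩

lemma sdiff_card_erase {X Y : Finset α} {x : α} (hxX : x ∈ X) (hxY : x ∉ Y) :
    (X \ Y).card = (X.erase x \ Y).card + 1 := by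
  have h1 : X.erase x \ Y = (X \ Y).erase x := by
    ext a
    simp only [Finset.mem_erase, Finset.mem_sdiff]
    tauto
  have h2 : x ∈ X \ Y := Finset.mem_sdiff.mpr ⟨hxX, hxY⟩
  have h3 : 1 ≤ (X \ Y).card := Finset.card_pos.mpr ⟨x, h2⟩
  rw [h1, Finset.card_erase_of_mem h2]
  omega

lemma tight_union (M : Fin n → FinMatroid α) {X A B : Finset α} (hA : A ⊆ X) (hB : B ⊆ X)
    (hAt : (∑ i, rankOf (M i).Indep A) + (X \ A).card = kmin M X)
    (hBt : (∑ i, rankOf (M i).Indep B) + (X \ B).card = kmin M X) :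
    (∑ i, rankOf (M i).Indep (A ∪ B)) + (X \ (A ∪ B)).card = kmin M X := by
  have hsub : (∑ i, rankOf (M i).Indep (A ∪ B)) + (∑ i, rankOf (M i).Indep (A ∩ B)) ≤
      (∑ i, rankOf (M i).Indep A) + (∑ i, rankOf (M i).Indep B) := by
    rw [← Finset.sum_add_distrib, ← Finset.sum_add_distrib]
    exact Finset.sum_le_sum fun i _ => rank_submod (M i) A B
  have hcard : (X \ (A ∪ B)).card + (X \ (A ∩ B)).card = (X \ A).card + (X \ B).card := by
    have h1 : X \ (A ∪ B) = (X \ A) ∩ (X \ B) := Finset.sdiff_union_distrib X A B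
    have h2 : X \ (A ∩ B) = (X \ A) ∪ (X \ B) := Finset.sdiff_inter_distrib_right X A B
    have h3 := Finset.card_union_add_card_inter (X \ A) (X \ B)
    rw [h1, h2]
    omega
  have hU := kmin_le (M := M) (X := X) (Y := A ∪ B) (Finset.union_subset hA hB)
  have hI := kmin_le (M := M) (X := X) (Y := A ∩ B) (Finset.inter_subset_left.trans hA)
  omega

lemma exists_union_indep_kmin (X : Finset α) :
    ∀ M : Fin n → FinMatroid α, ∃ I, I ⊆ X ∧ unionIndep M I ∧ I.card = kmin M X := by
  induction X using Finset.strongInduction with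
  | _ X IH =>
  intro M
  rcases Finset.eq_empty_or_nonempty X with rfl | ⟨x, hxX⟩
  · have hz : ∑ i, rankOf (M i).Indep (∅ : Finset α) = 0 :=
      Finset.sum_eq_zero fun i _ => rankOf_empty (M i).indep_empty
    have h1 : kmin M ∅ ≤ 0 := by
      have := kmin_le (M := M) (X := ∅) (Y := ∅) Finset.Subset.rfl
      simpa [hz] using this
    exact ⟨∅, Finset.Subset.rfl, unionIndep_empty M, by simpa using (Nat.le_zero.mp h1).symm⟩
  set X' := X.erase x with hX'
  have hX'ss : X' ⊂ X := Finset.erase_ssubset hxX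
  have hX'sub : X' ⊆ X := Finset.erase_subset x X
  have hxX' : x ∉ X' := by rw [hX']; exact Finset.notMem_erase x X
  have hxnot : ∀ {Z : Finset α}, Z ⊆ X' → x ∉ Z := fun hZ h => hxX' (hZ h)
  set k := kmin M X with hk
  set k' := kmin M X' with hk'
  have hval : ∀ Y, Y ⊆ X' → (X \ Y).card = (X' \ Y).card + 1 := by
    intro Y hY
    rw [hX']
    exact sdiff_card_erase hxX (hxnot hY)
  obtain ⟨Y', hY'sub, hY'val⟩ := exists_kmin M X'
  have hkA : k ≤ k' + 1 := by
    have h1 := kmin_le (M := M) (hY'sub.trans hX'sub)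
    rw [hval Y' hY'sub] at h1
    omega
  by_cases hkle : k ≤ k'
  · obtain ⟨I, hIX', hIind, hIcard⟩ := IH X' hX'ss M
    obtain ⟨t, htI, htcard⟩ := Finset.exists_subset_card_eq (s := I) (n := k) (by omega)
    exact ⟨t, htI.trans (hIX'.trans hX'sub), unionIndep_subset hIind htI, htcard⟩
  have hkk : k = k' + 1 := by omega
  by_cases hcase : ∃ i, ∃ hxi : (M i).Indep {x},
      k' ≤ kmin (Function.update M i ((M i).contract x hxi)) X'
  · obtain ⟨i, hxi, hky⟩ := hcase
    set M' := Function.update M i ((M i).contract x hxi) with hM'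
    obtain ⟨I, hIX', hIind, hIcard⟩ := IH X' hX'ss M'
    obtain ⟨t, htI, htcard⟩ := Finset.exists_subset_card_eq (s := I) (n := k') (by omega)
    have htind : unionIndep M' t := unionIndep_subset hIind htI
    obtain ⟨g, hg, htg⟩ := htind
    have htX' : t ⊆ X' := htI.trans hIX'
    have hxt : x ∉ t := hxnot htX'
    have hgi : x ∉ g i ∧ (M i).Indep (insert x (g i)) := by
      have := hg i
      rwa [hM', Function.update_self] at this
    refine ⟨insert x t, Finset.insert_subset hxX (htX'.trans hX'sub), ?_, ?_⟩
    · refine ⟨fun j => if j = i then insert x (g i) else g j, fun j => ?_, ?_⟩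
      · by_cases hji : j = i
        · subst hji
          simpa using hgi.2
        · have := hg j
          rw [hM', Function.update_of_ne hji] at this
          simpa [hji] using this
      · rw [htg]
        ext a
        simp only [Finset.mem_insert, Finset.mem_biUnion, Finset.mem_univ, true_and]
        constructor
        · rintro (rfl | ⟨j, hj⟩)
          · exact ⟨i, by simp⟩
          · by_cases hji : j = i
            · subst hji
              exact ⟨j, by simp [hj]⟩
            · exact ⟨j, by simp [hji, hj]⟩
        · rintro ⟨j, hj⟩
          by_cases hji : j = i
          · subst hji
            rw [if_pos rfl, Finset.mem_insert] at hj
            rcases hj with rfl | hj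
            · exact Or.inl rfl
            · exact Or.inr ⟨j, hj⟩
          · rw [if_neg hji] at hj
            exact Or.inr ⟨j, hj⟩
    · rw [Finset.card_insert_of_notMem hxt, htcard, hkk]
  · push_neg at hcase
    exfalso
    have key : ∀ i : Fin n, ∃ Y, Y ⊆ X' ∧
        ((∑ j, rankOf (M j).Indep Y) + (X \ Y).card = k) ∧
        rankOf (M i).Indep (insert x Y) = rankOf (M i).Indep Y := by
      intro i
      by_cases hxi : (M i).Indep {x}
      · have hlt := hcase i hxi
        set M' := Function.update M i ((M i).contract x hxi) with hM'
        obtain ⟨Z, hZsub, hZval⟩ := exists_kmin M' X'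
        have hxZ : x ∉ Z := hxnot hZsub
        have hZX : Z ⊆ X := hZsub.trans hX'sub
        have hsum : (∑ j, rankOf (M' j).Indep Z) + rankOf (M i).Indep Z + 1 =
            (∑ j, rankOf (M j).Indep Z) + rankOf (M i).Indep (insert x Z) := by
          have hupd : ∀ j, rankOf (M' j).Indep Z =
              Function.update (fun j => rankOf (M j).Indep Z) i
                (rankOf ((M i).contract x hxi).Indep Z) j := by
            intro j
            rw [hM']
            by_cases hji : j = i
            · subst hji
              rw [Function.update_self, Function.update_self]
            · rw [Function.update_of_ne hji, Function.update_of_ne hji]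
          rw [Finset.sum_congr rfl fun j _ => hupd j,
            Finset.sum_update_of_mem (Finset.mem_univ i)]
          have h2 := Finset.add_sum_erase Finset.univ (fun j => rankOf (M j).Indep Z)
            (Finset.mem_univ i)
          have h3 := contract_rank (M i) hxi hxZ
          simp only [Finset.erase_eq] at h2 ⊢
          omega
        have h1 : k ≤ (∑ j, rankOf (M j).Indep Z) + (X \ Z).card :=
          kmin_le (M := M) hZX
        have h2 : rankOf (M i).Indep Z ≤ rankOf (M i).Indep (insert x Z) :=
          rankOf_mono (M i).indep_empty (Finset.subset_insert x Z)
        have h3 : (X \ Z).card = (X' \ Z).card + 1 := hval Z hZsub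
        refine ⟨Z, hZsub, ?_, ?_⟩ <;> omega
      · refine ⟨Y', hY'sub, ?_, rank_insert_of_not_indep (M i) hxi Y'⟩
        rw [hval Y' hY'sub]
        omega
    choose Yf hYsub hYtight hYpres using key
    have fold : ∀ S : Finset (Fin n), ∃ Y, Y ⊆ X' ∧
        ((∑ j, rankOf (M j).Indep Y) + (X \ Y).card = k) ∧
        ∀ i ∈ S, rankOf (M i).Indep (insert x Y) = rankOf (M i).Indep Y := by
      intro S
      induction S using Finset.induction_on with
      | empty =>
        refine ⟨Y', hY'sub, ?_, by simp⟩
        rw [hval Y' hY'sub]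
        omega
      | @insert a S ha ih =>
        obtain ⟨Y, hY1, hY2, hY3⟩ := ih
        refine ⟨Y ∪ Yf a, Finset.union_subset hY1 (hYsub a), ?_, ?_⟩
        · exact tight_union M (hY1.trans hX'sub) ((hYsub a).trans hX'sub) hY2 (hYtight a)
        · intro j hj
          rcases Finset.mem_insert.mp hj with hja | hjS
          · subst hja
            rw [Finset.union_comm]
            exact rank_insert_preserve (M j) (hYpres j) (hxnot (hYsub j)) (hxnot hY1)
          · exact rank_insert_preserve (M j) (hY3 j hjS) (hxnot hY1) (hxnot (hYsub a))
    obtain ⟨Y, hY1, hY2, hY3⟩ := fold Finset.univ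
    have hxY : x ∉ Y := hxnot hY1
    have hsum : ∑ j, rankOf (M j).Indep (insert x Y) = ∑ j, rankOf (M j).Indep Y :=
      Finset.sum_congr rfl fun j _ => hY3 j (Finset.mem_univ j)
    have hins : insert x Y ⊆ X := Finset.insert_subset hxX (hY1.trans hX'sub)
    have hcard : (X \ insert x Y).card + 1 = (X \ Y).card := by
      have h1 : X \ insert x Y = (X \ Y).erase x := by
        ext a
        simp only [Finset.mem_sdiff, Finset.mem_insert, Finset.mem_erase]
        tauto
      have h2 : x ∈ X \ Y := Finset.mem_sdiff.mpr ⟨hxX, hxY⟩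
      have h3 : 1 ≤ (X \ Y).card := Finset.card_pos.mpr ⟨x, h2⟩
      rw [h1, Finset.card_erase_of_mem h2]
      omega
    have hle := kmin_le (M := M) hins
    rw [hsum] at hle
    omega

end Main

/-- Matroid union theorem (Nash-Williams): the rank of the union `M₁ ∨ ⋯ ∨ Mₙ`
at `X` equals `min_{Y ⊆ X} (∑ᵢ rᵢ(Y) + |X \ Y|)`. -/
theorem matroid_union_rank {α : Type*} [DecidableEq α] {n : ℕ}
    (M : Fin n → FinMatroid α) (X : Finset α) :
    rankOf (unionIndep M) X =
      X.powerset.inf' ⟨∅, Finset.empty_mem_powerset X⟩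
        (fun Y => (∑ i, rankOf (M i).Indep Y) + (X \ Y).card) := by
  show rankOf (unionIndep M) X = kmin M X
  refine le_antisymm ?_ ?_
  · refine rankOf_le (unionIndep_empty M) fun I hIX hI => ?_
    obtain ⟨Y, hYX, hYval⟩ := exists_kmin M X
    rw [hYval]
    exact unionIndep_card_le hIX hI hYX
  · obtain ⟨I, hIX, hI, hcard⟩ := exists_union_indep_kmin X M
    calc kmin M X = I.card := hcard.symm
    _ ≤ rankOf (unionIndep M) X := le_rankOf hIX hI
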